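/- For 0 < r < 1 and real z > 1, the Stieltjes transform of μ(r,c) equals ((z²−r²)(z+c) − (1+cz)√(1−r²)√(z²−r²)) / ((z²−1)(z²−r²)). -/

import Mathlib

open Real

lemma arcsin_aux_deriv (r a : ℝ) (hr : 0 < r) (hra : r < a) {x : ℝ}
    (hx : x ∈ Set.Ioo (-r) r) :
    HasDerivAt (fun y => Real.arcsin ((r^2 - a*y)/(r*(a-y))))
      (-(Real.sqrt (a^2 - r^2) / ((a - x) * Real.sqrt (r^2 - x^2)))) x := by
  obtain ⟨hx1, hx2⟩ := hx
  have hax : 0 < a - x := by linarith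
  have hrx : 0 < r^2 - x^2 := by nlinarith
  have har : 0 < a^2 - r^2 := by nlinarith
  have hd : r * (a - x) ≠ 0 := by positivity
  have hu : HasDerivAt (fun y => (r^2 - a*y)/(r*(a-y))) ((r^2 - a^2)/(r*(a-x)^2)) x := by
    have h1 : HasDerivAt (fun y : ℝ => r^2 - a*y) (-a) x := by
      simpa using (HasDerivAt.const_mul a (hasDerivAt_id x)).const_sub (r^2)
    have h2 : HasDerivAt (fun y : ℝ => r*(a-y)) (-r) x := by
      simpa using (((hasDerivAt_id x).const_sub a).const_mul r)
    have := h1.div h2 hd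
    convert this using 1 <;> try rfl
    field_simp
    ring
  have h1u : 1 - ((r^2 - a*x)/(r*(a-x))) ^ 2 = (a^2-r^2)*(r^2-x^2)/(r*(a-x))^2 := by
    field_simp
    ring
  have hpos : 0 < 1 - ((r^2 - a*x)/(r*(a-x))) ^ 2 := by
    rw [h1u]; positivity
  have hne1 : (r^2 - a*x)/(r*(a-x)) ≠ -1 := by
    intro h; rw [h] at hpos; norm_num at hpos
  have hne2 : (r^2 - a*x)/(r*(a-x)) ≠ 1 := by
    intro h; rw [h] at hpos; norm_num at hpos
  have harc := (Real.hasDerivAt_arcsin hne1 hne2).comp x hu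
  convert harc using 1 <;> try rfl
  have hs : Real.sqrt (1 - ((r^2 - a*x)/(r*(a-x)))^2)
      = Real.sqrt (a^2-r^2) * Real.sqrt (r^2-x^2) / (r*(a-x)) := by
    rw [h1u, Real.sqrt_div (by positivity), Real.sqrt_mul har.le, Real.sqrt_sq (by positivity)]
  rw [hs]
  have hA : Real.sqrt (a^2-r^2) ^ 2 = a^2 - r^2 := Real.sq_sqrt har.le
  have hA0 : (0:ℝ) < Real.sqrt (a^2-r^2) := Real.sqrt_pos.2 har
  have hB0 : (0:ℝ) < Real.sqrt (r^2-x^2) := Real.sqrt_pos.2 hrx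
  field_simp
  linear_combination (-1 : ℝ) * hA

lemma arcsin_aux_deriv' (r a : ℝ) (hr : 0 < r) (hra : r < a) {x : ℝ}
    (hx : x ∈ Set.Ioo (-r) r) :
    HasDerivAt (fun y => Real.arcsin ((r^2 + a*y)/(r*(a+y))))
      (Real.sqrt (a^2 - r^2) / ((a + x) * Real.sqrt (r^2 - x^2))) x := by
  obtain ⟨hx1, hx2⟩ := hx
  have hx' : -x ∈ Set.Ioo (-r) r := ⟨by linarith, by linarith⟩
  have h := (arcsin_aux_deriv r a hr hra hx').comp x (hasDerivAt_neg x)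
  have heq : ((fun y => Real.arcsin ((r^2 - a*y)/(r*(a-y)))) ∘ Neg.neg)
      = fun y => Real.arcsin ((r^2 + a*y)/(r*(a+y))) := by
    funext y
    simp [Function.comp, mul_neg, sub_neg_eq_add]
  rw [heq] at h
  convert h using 1 <;> try rfl
  rw [neg_sq, sub_neg_eq_add]
  ring

set_option maxHeartbeats 1000000 in
theorem asymmetric_stieltjes_transform (r c : ℝ) (hr0 : 0 < r) (hr1 : r < 1)
    (hc : c ∈ Set.Icc (-(1/r)) (1/r)) (z : ℝ) (hz : 1 < z) :
    ∫ x in (-r)..r,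
      ((1 + c * x) *
        (Real.sqrt (1 - r^2) / (Real.pi * (1 - x^2) * Real.sqrt (r^2 - x^2)))) / (z - x)
    = ((z^2 - r^2) * (z + c)
        - (1 + c * z) * Real.sqrt (1 - r^2) * Real.sqrt (z^2 - r^2)) /
        ((z^2 - 1) * (z^2 - r^2)) := by
  obtain ⟨hc1, hc2⟩ := hc
  have hrz : r < z := by linarith
  have hab : (-r) ≤ r := by linarith
  have h1r2 : 0 < 1 - r^2 := by nlinarith
  have hz2r2 : 0 < z^2 - r^2 := by nlinarith
  have hs0 : 0 < Real.sqrt (1 - r^2) := Real.sqrt_pos.2 h1r2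
  have ht0 : 0 < Real.sqrt (z^2 - r^2) := Real.sqrt_pos.2 hz2r2
  have hz1 : (0:ℝ) < z - 1 := by linarith
  have hz1' : (0:ℝ) < z + 1 := by linarith
  have h1z2 : 1 - z^2 ≠ 0 := by nlinarith
  set A := (1+c)/(2*(z-1)) with hAdef
  set B := (1-c)/(2*(z+1)) with hBdef
  set C := (1+c*z)/(1-z^2) with hCdef
  set F : ℝ → ℝ := fun x => (1/Real.pi) * (B * Real.arcsin ((r^2 + x)/(r*(1+x)))
      - A * Real.arcsin ((r^2 - x)/(r*(1-x)))
      - (Real.sqrt (1-r^2) * C / Real.sqrt (z^2-r^2)) *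
          Real.arcsin ((r^2 - z*x)/(r*(z-x)))) with hFdef
  -- continuity
  have hcont : ContinuousOn F (Set.Icc (-r) r) := by
    apply ContinuousOn.mul continuousOn_const
    apply ContinuousOn.sub
    apply ContinuousOn.sub
    · apply ContinuousOn.mul continuousOn_const
      apply Real.continuous_arcsin.comp_continuousOn
      apply ContinuousOn.div
      · fun_prop
      · fun_prop
      · intro x hx
        have : 0 < 1 + x := by linarith [hx.1]
        positivity
    · apply ContinuousOn.mul continuousOn_const
      apply Real.continuous_arcsin.comp_continuousOn
      apply ContinuousOn.div
      · fun_prop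
      · fun_prop
      · intro x hx
        have : 0 < 1 - x := by linarith [hx.2]
        positivity
    · apply ContinuousOn.mul continuousOn_const
      apply Real.continuous_arcsin.comp_continuousOn
      apply ContinuousOn.div
      · fun_prop
      · fun_prop
      · intro x hx
        have : 0 < z - x := by linarith [hx.2]
        positivity
  -- derivative
  have hderiv : ∀ x ∈ Set.Ioo (-r) r, HasDerivAt F
      (((1 + c * x) *
        (Real.sqrt (1 - r^2) / (Real.pi * (1 - x^2) * Real.sqrt (r^2 - x^2)))) / (z - x)) x := by
    intro x hx
    obtain ⟨hx1, hx2⟩ := hx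
    have hrx : 0 < r^2 - x^2 := by nlinarith
    have hq0 : 0 < Real.sqrt (r^2 - x^2) := Real.sqrt_pos.2 hrx
    have h1x : 0 < 1 + x := by linarith
    have h1x' : 0 < 1 - x := by linarith
    have hzx : 0 < z - x := by linarith
    have h1 := arcsin_aux_deriv' r 1 hr0 hr1 ⟨hx1, hx2⟩
    have h2 := arcsin_aux_deriv r 1 hr0 hr1 ⟨hx1, hx2⟩
    have h3 := arcsin_aux_deriv r z hr0 hrz ⟨hx1, hx2⟩
    simp only [one_mul, one_pow] at h1 h2
    have hd := (((h1.const_mul B).sub (h2.const_mul A)).sub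
      (h3.const_mul (Real.sqrt (1-r^2) * C / Real.sqrt (z^2-r^2)))).const_mul (1/Real.pi)
    convert hd using 1 <;> try rfl
    have hT : Real.sqrt (z^2-r^2) ≠ 0 := ne_of_gt ht0
    have hπ : Real.pi ≠ 0 := Real.pi_ne_zero
    have h1x0 : (1:ℝ)+x ≠ 0 := ne_of_gt h1x
    have h1x0' : (1:ℝ)-x ≠ 0 := ne_of_gt h1x'
    have hzx0 : z - x ≠ 0 := ne_of_gt hzx
    have hq0' : Real.sqrt (r^2-x^2) ≠ 0 := ne_of_gt hq0
    have h1x2 : 1 - x^2 ≠ 0 := by nlinarith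
    have hz10 : z - 1 ≠ 0 := ne_of_gt hz1
    have hz10' : z + 1 ≠ 0 := ne_of_gt hz1'
    rw [hAdef, hBdef, hCdef]
    field_simp
    ring
  -- nonnegativity
  have hpos : ∀ x ∈ Set.Ioo (-r) r, 0 ≤
      ((1 + c * x) *
        (Real.sqrt (1 - r^2) / (Real.pi * (1 - x^2) * Real.sqrt (r^2 - x^2)))) / (z - x) := by
    intro x hx
    obtain ⟨hx1, hx2⟩ := hx
    have hrx : 0 < r^2 - x^2 := by nlinarith
    have hq0 : 0 < Real.sqrt (r^2 - x^2) := Real.sqrt_pos.2 hrx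
    have hcx : 0 ≤ 1 + c * x := by
      have habs : |c * x| ≤ 1 := by
        rw [abs_mul]
        calc |c| * |x| ≤ (1/r) * r := by
              apply mul_le_mul (abs_le.2 ⟨hc1, hc2⟩) (le_of_lt (abs_lt.2 ⟨hx1, hx2⟩))
                (abs_nonneg x) (by positivity)
          _ = 1 := by field_simp
      have := neg_abs_le (c * x)
      linarith [abs_le.1 habs]
    have hden : 0 < Real.pi * (1 - x^2) * Real.sqrt (r^2 - x^2) :=
      mul_pos (mul_pos Real.pi_pos (by nlinarith)) hq0
    exact div_nonneg (mul_nonneg hcx (div_nonneg hs0.le hden.le)) (by linarith)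
  -- integrability
  have hint : IntervalIntegrable (fun x =>
      ((1 + c * x) *
        (Real.sqrt (1 - r^2) / (Real.pi * (1 - x^2) * Real.sqrt (r^2 - x^2)))) / (z - x))
      MeasureTheory.volume (-r) r := by
    apply intervalIntegral.intervalIntegrable_deriv_of_nonneg (g := F)
    · rwa [Set.uIcc_of_le hab]
    · rwa [min_eq_left hab, max_eq_right hab]
    · rwa [min_eq_left hab, max_eq_right hab]
  have key := intervalIntegral.integral_eq_sub_of_hasDerivAt_of_le hab hcont hderiv hint
  rw [key, hFdef]
  have hr1' : r * (1 + r) ≠ 0 := by positivity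
  have hr2' : r * (1 - r) ≠ 0 := by
    have : 0 < 1 - r := by linarith
    positivity
  have hr3' : r * (z - r) ≠ 0 := by
    have : 0 < z - r := by linarith
    positivity
  have e1 : (r^2 + r)/(r*(1+r)) = 1 := by rw [div_eq_one_iff_eq hr1']; ring
  have e2 : (r^2 - r)/(r*(1-r)) = -1 := by rw [div_eq_iff hr2']; ring
  have e3 : (r^2 - z*r)/(r*(z-r)) = -1 := by rw [div_eq_iff hr3']; ring
  have e4 : (r^2 + -r)/(r*(1 + -r)) = -1 := by rw [div_eq_iff (by rwa [← sub_eq_add_neg])]; ring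
  have e5 : (r^2 - -r)/(r*(1 - -r)) = 1 := by rw [div_eq_one_iff_eq (by rwa [sub_neg_eq_add])]; ring
  have e6 : (r^2 - z * -r)/(r*(z - -r)) = 1 := by
    rw [div_eq_one_iff_eq]
    · ring
    · have : 0 < z + r := by linarith
      rw [sub_neg_eq_add]; positivity
  simp only [e1, e2, e3, e4, e5, e6, Real.arcsin_one, Real.arcsin_neg_one]
  have ht2 : Real.sqrt (z^2-r^2) * Real.sqrt (z^2-r^2) = z^2 - r^2 :=
    Real.mul_self_sqrt hz2r2.le
  have hT : Real.sqrt (z^2-r^2) ≠ 0 := ne_of_gt ht0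
  have hrt : Real.sqrt (1-r^2) * C / Real.sqrt (z^2-r^2)
      = Real.sqrt (1-r^2) * Real.sqrt (z^2-r^2) * C / (z^2-r^2) := by
    rw [div_eq_div_iff hT (ne_of_gt hz2r2)]
    linear_combination (-(Real.sqrt (1-r^2) * C)) * ht2
  rw [hrt, hAdef, hBdef, hCdef]
  have hpi : Real.pi ≠ 0 := Real.pi_ne_zero
  have hz21 : z^2 - 1 ≠ 0 := by nlinarith
  have hz10 : z - 1 ≠ 0 := ne_of_gt hz1
  have hz10' : z + 1 ≠ 0 := ne_of_gt hz1'
  field_simp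
  ring
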